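/- Let ρ_k ≥ 0 with Σ_k ρ_k =: N < ∞ and φ_k an orthonormal family in H¹(0,1) with E := Σ_k ρ_k ‖φ_k‖_{H¹}² < ∞. Then n(x) = Σ_k ρ_k |φ_k(x)|² satisfies ‖n'‖_{L²(0,1)} ≤ C N^{1/4} E^{3/4} for a universal constant C. -/

import Mathlib

open MeasureTheory Set

lemma tsum_cauchy_schwarz' {u v : ℕ → ℝ} (hu : ∀ k, 0 ≤ u k) (hv : ∀ k, 0 ≤ v k)
    (hu2 : Summable (fun k => u k ^ 2)) (hv2 : Summable (fun k => v k ^ 2)) :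
    ∑' k, u k * v k ≤ Real.sqrt (∑' k, u k ^ 2) * Real.sqrt (∑' k, v k ^ 2) := by
  have hsum : Summable (fun k => u k * v k) := by
    refine Summable.of_nonneg_of_le (fun k => mul_nonneg (hu k) (hv k)) (fun k => ?_)
      ((hu2.add hv2).mul_left (1/2 : ℝ))
    nlinarith [sq_nonneg (u k - v k)]
  refine Summable.tsum_le_of_sum_le hsum fun s => ?_
  have h1 : (∑ k ∈ s, u k * v k) ^ 2 ≤ (∑ k ∈ s, u k ^ 2) * ∑ k ∈ s, v k ^ 2 :=
    Finset.sum_mul_sq_le_sq_mul_sq s u v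
  have h0 : (0:ℝ) ≤ ∑ k ∈ s, u k * v k :=
    Finset.sum_nonneg fun k _ => mul_nonneg (hu k) (hv k)
  have h2 : ∑ k ∈ s, u k * v k ≤
      Real.sqrt ((∑ k ∈ s, u k ^ 2) * ∑ k ∈ s, v k ^ 2) := by
    calc ∑ k ∈ s, u k * v k = Real.sqrt ((∑ k ∈ s, u k * v k)^2) := (Real.sqrt_sq h0).symm
      _ ≤ _ := Real.sqrt_le_sqrt h1
  refine h2.trans ?_
  rw [Real.sqrt_mul (Finset.sum_nonneg fun k _ => sq_nonneg _)]
  exact mul_le_mul (Real.sqrt_le_sqrt (Summable.sum_le_tsum s (fun k _ => sq_nonneg _) hu2))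
    (Real.sqrt_le_sqrt (Summable.sum_le_tsum s (fun k _ => sq_nonneg _) hv2))
    (Real.sqrt_nonneg _) (Real.sqrt_nonneg _)


/-- There is a universal constant `C` such that: if `ρ_k ≥ 0` with `Σ_k ρ_k = N < ∞`
and `(φ_k)` is an orthonormal family in `H¹(0,1)` (derivatives `D_k`) with
`E = Σ_k ρ_k ‖φ_k‖_{H¹}² < ∞`, then the derivative
`n' = Σ_k ρ_k (φ_k' \overline{φ_k} + φ_k \overline{φ_k'})` of
`n(x) = Σ_k ρ_k |φ_k(x)|²` satisfies `‖n'‖_{L²(0,1)} ≤ C N^{1/4} E^{3/4}`. -/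
theorem localDensityDeriv_L2_bound :
    ∃ C > (0 : ℝ), ∀ (ρ : ℕ → ℝ) (φ D : ℕ → ℝ → ℂ),
      (∀ k, 0 ≤ ρ k) → Summable ρ →
      (∀ k, ∀ x ∈ Ioo (0 : ℝ) 1, HasDerivAt (φ k) (D k x) x) →
      (∀ k, IntegrableOn (fun x => ‖φ k x‖ ^ 2) (Ioo 0 1)) →
      (∀ k, IntegrableOn (fun x => ‖D k x‖ ^ 2) (Ioo 0 1)) →
      (∀ j k, (∫ x in Ioo (0 : ℝ) 1, (starRingEnd ℂ) (φ j x) * φ k x) =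
        if j = k then 1 else 0) →
      Summable (fun k => ρ k *
        ((∫ x in Ioo (0 : ℝ) 1, ‖φ k x‖ ^ 2) + ∫ x in Ioo (0 : ℝ) 1, ‖D k x‖ ^ 2)) →
      Real.sqrt (∫ x in Ioo (0 : ℝ) 1,
          (∑' k, ρ k * (2 * ((starRingEnd ℂ) (φ k x) * D k x).re)) ^ 2) ≤
        C * (∑' k, ρ k) ^ ((1 : ℝ) / 4) *
          (∑' k, ρ k * ((∫ y in Ioo (0 : ℝ) 1, ‖φ k y‖ ^ 2) +
            ∫ y in Ioo (0 : ℝ) 1, ‖D k y‖ ^ 2)) ^ ((3 : ℝ) / 4) := by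
  refine ⟨Real.sqrt 12, by positivity, ?_⟩
  intro ρ φ D hρ hρsum hderiv hφI hDI horth hE
  -- local abbreviations (definitionally transparent)
  set E : ℕ → ℝ := fun k =>
    (∫ x in Ioo (0:ℝ) 1, ‖φ k x‖ ^ 2) + ∫ x in Ioo (0:ℝ) 1, ‖D k x‖ ^ 2 with hEdef
  set f : ℕ → ℝ → ℝ := fun k x => 2 * ((starRingEnd ℂ) (φ k x) * D k x).re with hfdef
  set s : ℕ → ℝ := fun k => Real.sqrt (Real.sqrt (E k)) with hsdef
  have hEsum : Summable (fun k => ρ k * E k) := hE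
  -- measurability
  have hφm : ∀ k, AEStronglyMeasurable (φ k) (volume.restrict (Ioo (0:ℝ) 1)) := by
    intro k
    have : ContinuousOn (φ k) (Ioo (0:ℝ) 1) :=
      fun x hx => ((hderiv k x hx).continuousAt.continuousWithinAt)
    exact this.aestronglyMeasurable measurableSet_Ioo
  have hDm : ∀ k, AEStronglyMeasurable (D k) (volume.restrict (Ioo (0:ℝ) 1)) := by
    intro k
    have h1 : StronglyMeasurable (deriv (φ k)) :=
      (measurable_deriv (φ k)).stronglyMeasurable
    refine h1.aestronglyMeasurable.congr ?_
    refine (ae_restrict_iff' measurableSet_Ioo).mpr (ae_of_all _ fun x hx => ?_)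
    exact (hderiv k x hx).deriv
  have hfm : ∀ k, AEStronglyMeasurable (f k) (volume.restrict (Ioo (0:ℝ) 1)) := by
    intro k
    exact (Complex.continuous_re.comp_aestronglyMeasurable
      ((Complex.continuous_conj.comp_aestronglyMeasurable (hφm k)).mul (hDm k))).const_mul 2
  -- pointwise bound on f
  have hfb : ∀ k x, |f k x| ≤ 2 * ‖φ k x‖ * ‖D k x‖ := by
    intro k x
    have h1 : |((starRingEnd ℂ) (φ k x) * D k x).re| ≤ ‖(starRingEnd ℂ) (φ k x) * D k x‖ := by
      exact Complex.abs_re_le_norm _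
    have h2 : ‖(starRingEnd ℂ) (φ k x) * D k x‖ = ‖φ k x‖ * ‖D k x‖ := by
      rw [norm_mul, RCLike.norm_conj]
    calc |f k x| = 2 * |((starRingEnd ℂ) (φ k x) * D k x).re| := by
          rw [hfdef]; rw [abs_mul]; norm_num
      _ ≤ 2 * (‖φ k x‖ * ‖D k x‖) := by rw [← h2]; linarith
      _ = 2 * ‖φ k x‖ * ‖D k x‖ := by ring
  have hfI : ∀ k, IntegrableOn (f k) (Ioo (0:ℝ) 1) := by
    intro k
    refine Integrable.mono' ((hφI k).add (hDI k)) (hfm k) (ae_of_all _ fun x => ?_)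
    have h1 := hfb k x
    have h2 : 2*‖φ k x‖*‖D k x‖ ≤ ‖φ k x‖^2 + ‖D k x‖^2 := by
      nlinarith [sq_nonneg (‖φ k x‖ - ‖D k x‖)]
    simpa [Real.norm_eq_abs] using h1.trans h2
  -- normalization
  have hP1 : ∀ k, (∫ x in Ioo (0:ℝ) 1, ‖φ k x‖ ^ 2) = 1 := by
    intro k
    have hint : Integrable (fun x => (starRingEnd ℂ) (φ k x) * φ k x)
        (volume.restrict (Ioo (0:ℝ) 1)) := by
      refine Integrable.mono' (hφI k)
        ((Complex.continuous_conj.comp_aestronglyMeasurable (hφm k)).mul (hφm k))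
        (ae_of_all _ fun x => ?_)
      rw [norm_mul, RCLike.norm_conj, ← sq]
    have h3 : ∀ x, ((starRingEnd ℂ) (φ k x) * φ k x).re = ‖φ k x‖ ^ 2 := by
      intro x
      rw [Complex.sq_norm, Complex.normSq_apply, Complex.mul_re]
      simp [Complex.conj_re, Complex.conj_im]
    calc (∫ x in Ioo (0:ℝ) 1, ‖φ k x‖ ^ 2)
        = ∫ x in Ioo (0:ℝ) 1, ((starRingEnd ℂ) (φ k x) * φ k x).re :=
          integral_congr_ae (ae_of_all _ fun x => (h3 x).symm)
      _ = 1 := by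
          have h2 := integral_re hint
          rw [horth k k] at h2
          simpa using h2
  have hQ0 : ∀ k, 0 ≤ ∫ x in Ioo (0:ℝ) 1, ‖D k x‖ ^ 2 :=
    fun k => integral_nonneg fun x => sq_nonneg _
  have hE1 : ∀ k, 1 ≤ E k := by
    intro k; rw [hEdef]; simp only; rw [hP1 k]; linarith [hQ0 k]
  have hE0 : ∀ k, 0 ≤ E k := fun k => le_trans zero_le_one (hE1 k)
  have hs1 : ∀ k, 1 ≤ s k := by
    intro k
    rw [hsdef]
    have h1 : (1:ℝ) ≤ Real.sqrt (E k) := by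
      rw [show (1:ℝ) = Real.sqrt 1 by simp]; exact Real.sqrt_le_sqrt (hE1 k)
    rw [show (1:ℝ) = Real.sqrt 1 by simp]; exact Real.sqrt_le_sqrt h1
  have hs0 : ∀ k, 0 < s k := fun k => lt_of_lt_of_le one_pos (hs1 k)
  have hs2 : ∀ k, s k ^ 2 = Real.sqrt (E k) := fun k => Real.sq_sqrt (Real.sqrt_nonneg _)
  have hs4 : ∀ k, s k ^ 4 = E k := by
    intro k
    have : s k ^ 4 = (s k ^ 2) ^ 2 := by ring
    rw [this, hs2, Real.sq_sqrt (hE0 k)]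
  -- sup bound
  have hsup : ∀ k, ∀ x ∈ Ioo (0:ℝ) 1, ‖φ k x‖ ^ 2 ≤ 3 * s k ^ 2 := by
    intro k
    have hd2 : ∀ t ∈ Ioo (0:ℝ) 1, HasDerivAt (fun y => ‖φ k y‖ ^ 2) (f k t) t := by
      intro t ht
      have hd := hderiv k t ht
      have hre : HasDerivAt (fun y => (φ k y).re) (D k t).re t :=
        Complex.reCLM.hasFDerivAt.comp_hasDerivAt t hd
      have him : HasDerivAt (fun y => (φ k y).im) (D k t).im t :=
        Complex.imCLM.hasFDerivAt.comp_hasDerivAt t hd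
      have h := (hre.mul hre).add (him.mul him)
      have hfun : (fun y => ‖φ k y‖ ^ 2)
          = (fun y => (φ k y).re * (φ k y).re + (φ k y).im * (φ k y).im) := by
        funext y
        rw [Complex.sq_norm, Complex.normSq_apply]
      rw [hfun]
      refine HasDerivAt.congr_deriv h ?_
      rw [hfdef]
      simp only [Complex.mul_re, Complex.conj_re, Complex.conj_im]
      ring
    have habs : (∫ x in Ioo (0:ℝ) 1, |f k x|) ≤ 2 * Real.sqrt (E k) := by
      set t := Real.sqrt (E k) with htdef
      have ht1 : (1:ℝ) ≤ t := by
        rw [htdef, show (1:ℝ) = Real.sqrt 1 by simp]; exact Real.sqrt_le_sqrt (hE1 k)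
      have ht0 : (0:ℝ) < t := lt_of_lt_of_le one_pos ht1
      have ht2 : t ^ 2 = E k := Real.sq_sqrt (hE0 k)
      have h4 : t * t⁻¹ = 1 := mul_inv_cancel₀ (ne_of_gt ht0)
      have hpt : ∀ x, |f k x| ≤ t * ‖φ k x‖ ^ 2 + t⁻¹ * ‖D k x‖ ^ 2 := by
        intro x
        refine (hfb k x).trans ?_
        nlinarith [mul_nonneg (inv_nonneg.mpr ht0.le)
          (sq_nonneg (t * ‖φ k x‖ - ‖D k x‖)), norm_nonneg (φ k x), norm_nonneg (D k x)]
      have hQE : (∫ x in Ioo (0:ℝ) 1, ‖D k x‖ ^ 2) ≤ E k := by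
        have hEk : E k = (∫ x in Ioo (0:ℝ) 1, ‖φ k x‖ ^ 2)
            + ∫ x in Ioo (0:ℝ) 1, ‖D k x‖ ^ 2 := rfl
        rw [hEk, hP1 k]; linarith
      have hint2 : Integrable (fun x => t * ‖φ k x‖ ^ 2 + t⁻¹ * ‖D k x‖ ^ 2)
          (volume.restrict (Ioo (0:ℝ) 1)) := ((hφI k).const_mul t).add ((hDI k).const_mul t⁻¹)
      calc (∫ x in Ioo (0:ℝ) 1, |f k x|)
          ≤ ∫ x in Ioo (0:ℝ) 1, (t * ‖φ k x‖ ^ 2 + t⁻¹ * ‖D k x‖ ^ 2) :=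
            integral_mono_of_nonneg (ae_of_all _ fun x => abs_nonneg _) hint2 (ae_of_all _ hpt)
        _ = t * (∫ x in Ioo (0:ℝ) 1, ‖φ k x‖ ^ 2)
            + t⁻¹ * ∫ x in Ioo (0:ℝ) 1, ‖D k x‖ ^ 2 := by
            rw [integral_add ((hφI k).const_mul t) ((hDI k).const_mul t⁻¹),
              integral_const_mul, integral_const_mul]
        _ ≤ 2 * t := by
            rw [hP1 k]
            have h5 : t⁻¹ * (∫ x in Ioo (0:ℝ) 1, ‖D k x‖ ^ 2) ≤ t⁻¹ * t ^ 2 :=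
              mul_le_mul_of_nonneg_left (ht2 ▸ hQE) (inv_nonneg.mpr ht0.le)
            have h6 : t⁻¹ * t ^ 2 = t := by
              rw [pow_two, ← mul_assoc, inv_mul_cancel₀ (ne_of_gt ht0), one_mul]
            linarith
    have hy : ∃ y ∈ Ioo (0:ℝ) 1, ‖φ k y‖ ^ 2 ≤ 1 := by
      by_contra hcon
      push_neg at hcon
      have hnn : 0 ≤ᵐ[volume.restrict (Ioo (0:ℝ) 1)] fun x => ‖φ k x‖ ^ 2 - 1 :=
        (ae_restrict_iff' measurableSet_Ioo).mpr (ae_of_all _ fun x hx => by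
          have := hcon x hx; simp only [Pi.zero_apply]; linarith)
      have hconst : IntegrableOn (fun _ : ℝ => (1:ℝ)) (Ioo (0:ℝ) 1) := by
        apply (integrableOn_const_iff).mpr; right; rw [Real.volume_Ioo]
        exact ENNReal.ofReal_lt_top
      have hgi : IntegrableOn (fun x => ‖φ k x‖ ^ 2 - 1) (Ioo (0:ℝ) 1) := (hφI k).sub hconst
      have h0 : (∫ x in Ioo (0:ℝ) 1, (‖φ k x‖ ^ 2 - 1)) = 0 := by
        rw [integral_sub (hφI k) hconst, hP1 k]
        simp [Real.volume_Ioo]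
      have hpos : 0 < ∫ x in Ioo (0:ℝ) 1, (‖φ k x‖ ^ 2 - 1) := by
        rw [setIntegral_pos_iff_support_of_nonneg_ae hnn hgi]
        have hsub : Ioo (0:ℝ) 1 ⊆
            Function.support (fun x => ‖φ k x‖ ^ 2 - 1) ∩ Ioo (0:ℝ) 1 := by
          intro x hx
          refine ⟨?_, hx⟩
          have := hcon x hx
          simp only [Function.mem_support]
          intro hzero
          nlinarith
        refine lt_of_lt_of_le ?_ (measure_mono hsub)
        rw [Real.volume_Ioo]
        exact ENNReal.ofReal_pos.mpr (by norm_num)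
      exact absurd h0 (ne_of_gt hpos)
    obtain ⟨y, hyI, hy1⟩ := hy
    intro x hx
    have husub : uIcc y x ⊆ Ioo (0:ℝ) 1 := (Set.ordConnected_Ioo).uIcc_subset hyI hx
    have hFTC : (∫ u in y..x, f k u) = ‖φ k x‖ ^ 2 - ‖φ k y‖ ^ 2 := by
      refine intervalIntegral.integral_eq_sub_of_hasDerivAt
        (fun u hu => hd2 u (husub hu)) ?_
      exact ((hfI k).mono_set husub).intervalIntegrable
    have hb2 : |∫ u in y..x, f k u| ≤ ∫ u in Ioo (0:ℝ) 1, |f k u| := by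
      have h1 : ‖∫ u in y..x, f k u‖ ≤ ∫ u in Set.uIoc y x, ‖f k u‖ :=
        intervalIntegral.norm_integral_le_integral_norm_uIoc
      rw [Real.norm_eq_abs] at h1
      refine h1.trans ?_
      have h2 : (∫ u in Set.uIoc y x, ‖f k u‖) = ∫ u in Set.uIoc y x, |f k u| := by
        simp [Real.norm_eq_abs]
      rw [h2]
      refine setIntegral_mono_set ((hfI k).abs) (ae_of_all _ fun u => abs_nonneg _) ?_
      exact HasSubset.Subset.eventuallyLE (le_trans Set.uIoc_subset_uIcc husub)
    have h3 : ‖φ k x‖ ^ 2 - ‖φ k y‖ ^ 2 ≤ |∫ u in y..x, f k u| := by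
      rw [hFTC]; exact le_abs_self _
    have h7 : (1:ℝ) ≤ Real.sqrt (E k) := by
      rw [show (1:ℝ) = Real.sqrt 1 by simp]; exact Real.sqrt_le_sqrt (hE1 k)
    rw [hs2 k]
    linarith
  -- basic positivity helpers
  have hc0 : ∀ k x, 0 ≤ ρ k * (s k)⁻¹ * ‖D k x‖ ^ 2 :=
    fun k x => mul_nonneg (mul_nonneg (hρ k) (inv_nonneg.mpr (hs0 k).le)) (sq_nonneg _)
  have hcQ0 : ∀ k, 0 ≤ ρ k * (s k)⁻¹ * (∫ x in Ioo (0:ℝ) 1, ‖D k x‖ ^ 2) :=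
    fun k => mul_nonneg (mul_nonneg (hρ k) (inv_nonneg.mpr (hs0 k).le)) (hQ0 k)
  have hQE : ∀ k, (∫ x in Ioo (0:ℝ) 1, ‖D k x‖ ^ 2) ≤ E k := by
    intro k
    have hEk : E k = (∫ x in Ioo (0:ℝ) 1, ‖φ k x‖ ^ 2)
        + ∫ x in Ioo (0:ℝ) 1, ‖D k x‖ ^ 2 := rfl
    rw [hEk, hP1 k]; linarith [hQ0 k]
  have hs3E : ∀ k, s k ^ 3 ≤ E k := by
    intro k
    rw [← hs4 k]
    nlinarith [mul_nonneg (pow_nonneg (hs0 k).le 3) (sub_nonneg.mpr (hs1 k))]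
  have hs2E : ∀ k, s k ^ 2 ≤ E k := by
    intro k
    rw [← hs4 k]
    nlinarith [mul_nonneg (pow_nonneg (hs0 k).le 2) (sub_nonneg.mpr (hs1 k)),
      mul_nonneg (pow_nonneg (hs0 k).le 2)
        (mul_nonneg (sub_nonneg.mpr (hs1 k)) (sub_nonneg.mpr (hs1 k)))]
  have hsum3 : Summable (fun k => ρ k * s k ^ 3) :=
    Summable.of_nonneg_of_le (fun k => mul_nonneg (hρ k) (pow_nonneg (hs0 k).le 3))
      (fun k => mul_le_mul_of_nonneg_left (hs3E k) (hρ k)) hEsum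
  have hsum2 : Summable (fun k => ρ k * s k ^ 2) :=
    Summable.of_nonneg_of_le (fun k => mul_nonneg (hρ k) (pow_nonneg (hs0 k).le 2))
      (fun k => mul_le_mul_of_nonneg_left (hs2E k) (hρ k)) hEsum
  have hsum4 : Summable (fun k => ρ k * s k ^ 4) := hEsum.congr fun k => by rw [hs4 k]
  have hsinv : ∀ k, (s k)⁻¹ ≤ 1 := fun k => inv_le_one_of_one_le₀ (hs1 k)
  have hsumB : Summable
      (fun k => ρ k * (s k)⁻¹ * (∫ x in Ioo (0:ℝ) 1, ‖D k x‖ ^ 2)) := by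
    refine Summable.of_nonneg_of_le hcQ0 (fun k => ?_) hEsum
    have h1 : (s k)⁻¹ * (∫ x in Ioo (0:ℝ) 1, ‖D k x‖ ^ 2) ≤ E k := by
      calc (s k)⁻¹ * (∫ x in Ioo (0:ℝ) 1, ‖D k x‖ ^ 2)
          ≤ 1 * (∫ x in Ioo (0:ℝ) 1, ‖D k x‖ ^ 2) :=
            mul_le_mul_of_nonneg_right (hsinv k) (hQ0 k)
        _ = ∫ x in Ioo (0:ℝ) 1, ‖D k x‖ ^ 2 := one_mul _
        _ ≤ E k := hQE k
    calc ρ k * (s k)⁻¹ * (∫ x in Ioo (0:ℝ) 1, ‖D k x‖ ^ 2)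
        = ρ k * ((s k)⁻¹ * ∫ x in Ioo (0:ℝ) 1, ‖D k x‖ ^ 2) := by ring
      _ ≤ ρ k * E k := mul_le_mul_of_nonneg_left h1 (hρ k)
  set A := ∑' k, ρ k * s k ^ 3 with hAdef
  set B := ∑' k, ρ k * (s k)⁻¹ * (∫ x in Ioo (0:ℝ) 1, ‖D k x‖ ^ 2) with hBdef
  have hA0 : 0 ≤ A := tsum_nonneg fun k => mul_nonneg (hρ k) (pow_nonneg (hs0 k).le 3)
  have hB0 : 0 ≤ B := tsum_nonneg hcQ0
  have hBA : B ≤ A := by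
    refine Summable.tsum_le_tsum (fun k => ?_) hsumB hsum3
    have h2 : (s k)⁻¹ * s k ^ 4 = s k ^ 3 := by
      rw [show s k ^ 4 = s k * s k ^ 3 by ring, ← mul_assoc,
        inv_mul_cancel₀ (hs0 k).ne', one_mul]
    have h1 : (s k)⁻¹ * (∫ x in Ioo (0:ℝ) 1, ‖D k x‖ ^ 2) ≤ (s k)⁻¹ * s k ^ 4 :=
      mul_le_mul_of_nonneg_left ((hQE k).trans_eq (hs4 k).symm) (inv_nonneg.mpr (hs0 k).le)
    calc ρ k * (s k)⁻¹ * (∫ x in Ioo (0:ℝ) 1, ‖D k x‖ ^ 2)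
        = ρ k * ((s k)⁻¹ * ∫ x in Ioo (0:ℝ) 1, ‖D k x‖ ^ 2) := by ring
      _ ≤ ρ k * s k ^ 3 := mul_le_mul_of_nonneg_left (h1.trans_eq h2) (hρ k)
  -- the auxiliary density-like function G
  set F : ℕ → ℝ → ENNReal := fun k x => ENNReal.ofReal (ρ k * (s k)⁻¹ * ‖D k x‖ ^ 2) with hFdef
  have hci : ∀ k, Integrable (fun x => ρ k * (s k)⁻¹ * ‖D k x‖ ^ 2)
      (volume.restrict (Ioo (0:ℝ) 1)) := fun k => (hDI k).const_mul _
  have hFm : ∀ k, AEMeasurable (F k) (volume.restrict (Ioo (0:ℝ) 1)) := fun k =>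
    ENNReal.measurable_ofReal.comp_aemeasurable (hci k).aestronglyMeasurable.aemeasurable
  have hlin : (∫⁻ x in Ioo (0:ℝ) 1, ∑' k, F k x) = ENNReal.ofReal B := by
    rw [lintegral_tsum hFm]
    have h1 : ∀ k, (∫⁻ x in Ioo (0:ℝ) 1, F k x)
        = ENNReal.ofReal (ρ k * (s k)⁻¹ * ∫ x in Ioo (0:ℝ) 1, ‖D k x‖ ^ 2) := by
      intro k
      rw [← ofReal_integral_eq_lintegral_ofReal (hci k) (ae_of_all _ fun x => hc0 k x),
        integral_const_mul]
    simp_rw [h1]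
    rw [← ENNReal.ofReal_tsum_of_nonneg hcQ0 hsumB]
  have hFtm : AEMeasurable (fun x => ∑' k, F k x) (volume.restrict (Ioo (0:ℝ) 1)) :=
    AEMeasurable.ennreal_tsum hFm
  have hfin : (∫⁻ x in Ioo (0:ℝ) 1, ∑' k, F k x) ≠ ⊤ := by
    rw [hlin]; exact ENNReal.ofReal_ne_top
  have hae1 : ∀ᵐ x ∂(volume.restrict (Ioo (0:ℝ) 1)), (∑' k, F k x) < ⊤ :=
    ae_lt_top' hFtm hfin
  set G : ℝ → ℝ := fun x => ∑' k, ρ k * (s k)⁻¹ * ‖D k x‖ ^ 2 with hGdef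
  have hGnn : ∀ x, 0 ≤ G x := fun x => tsum_nonneg fun k => hc0 k x
  have haeG : ∀ᵐ x ∂(volume.restrict (Ioo (0:ℝ) 1)),
      Summable (fun k => ρ k * (s k)⁻¹ * ‖D k x‖ ^ 2)
        ∧ ENNReal.ofReal (G x) = ∑' k, F k x := by
    filter_upwards [hae1] with x hx
    have hsummable : Summable (fun k => ρ k * (s k)⁻¹ * ‖D k x‖ ^ 2) := by
      refine (ENNReal.summable_toReal hx.ne).congr fun k => ?_
      exact ENNReal.toReal_ofReal (hc0 k x)
    exact ⟨hsummable, ENNReal.ofReal_tsum_of_nonneg (fun k => hc0 k x) hsummable⟩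
  have hGm : AEStronglyMeasurable G (volume.restrict (Ioo (0:ℝ) 1)) := by
    have h1 : AEMeasurable (fun x => (∑' k, F k x).toReal)
        (volume.restrict (Ioo (0:ℝ) 1)) := hFtm.ennreal_toReal
    refine aestronglyMeasurable_iff_aemeasurable.mpr (h1.congr ?_)
    filter_upwards [haeG] with x hx
    rw [← hx.2, ENNReal.toReal_ofReal (hGnn x)]
  have hGlin : (∫⁻ x in Ioo (0:ℝ) 1, ENNReal.ofReal (G x)) = ENNReal.ofReal B := by
    rw [← hlin]
    refine lintegral_congr_ae ?_
    filter_upwards [haeG] with x hx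
    exact hx.2
  have hGI : IntegrableOn G (Ioo (0:ℝ) 1) := by
    refine ⟨hGm, ?_⟩
    rw [hasFiniteIntegral_iff_ofReal (ae_of_all _ hGnn), hGlin]
    exact ENNReal.ofReal_lt_top
  have hGint : (∫ x in Ioo (0:ℝ) 1, G x) = B := by
    rw [integral_eq_lintegral_of_nonneg_ae (ae_of_all _ hGnn) hGm, hGlin,
      ENNReal.toReal_ofReal hB0]
  -- pointwise a.e. bound for the squared density derivative
  have hsq3 : Real.sqrt 3 ^ 2 = 3 := Real.sq_sqrt (by norm_num)
  have hptwise : ∀ᵐ x ∂(volume.restrict (Ioo (0:ℝ) 1)),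
      (∑' k, ρ k * f k x) ^ 2 ≤ 12 * A * G x := by
    filter_upwards [haeG, ae_restrict_mem measurableSet_Ioo] with x hxG hxI
    obtain ⟨hvsum, -⟩ := hxG
    set u : ℕ → ℝ := fun k => Real.sqrt (ρ k * s k ^ 3) with hudef
    set w : ℕ → ℝ := fun k => Real.sqrt (ρ k * (s k)⁻¹ * ‖D k x‖ ^ 2) with hwdef
    have hu2 : ∀ k, u k ^ 2 = ρ k * s k ^ 3 :=
      fun k => Real.sq_sqrt (mul_nonneg (hρ k) (pow_nonneg (hs0 k).le 3))
    have hw2 : ∀ k, w k ^ 2 = ρ k * (s k)⁻¹ * ‖D k x‖ ^ 2 :=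
      fun k => Real.sq_sqrt (hc0 k x)
    have huw : ∀ k, u k * w k = ρ k * (s k * ‖D k x‖) := by
      intro k
      rw [hudef, hwdef,
        ← Real.sqrt_mul (mul_nonneg (hρ k) (pow_nonneg (hs0 k).le 3))]
      have hprod : ρ k * s k ^ 3 * (ρ k * (s k)⁻¹ * ‖D k x‖ ^ 2)
          = (ρ k * (s k * ‖D k x‖)) ^ 2 := by
        have hsne : s k ≠ 0 := (hs0 k).ne'
        field_simp
      rw [hprod, Real.sqrt_sq (mul_nonneg (hρ k) (mul_nonneg (hs0 k).le (norm_nonneg _)))]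
    have hterm : ∀ k, |ρ k * f k x| ≤ 2 * Real.sqrt 3 * (u k * w k) := by
      intro k
      rw [abs_mul, abs_of_nonneg (hρ k), huw k]
      have h2 : ‖φ k x‖ ≤ Real.sqrt 3 * s k := by
        have h3 := hsup k x hxI
        have h5 : Real.sqrt (‖φ k x‖ ^ 2) ≤ Real.sqrt (3 * s k ^ 2) := Real.sqrt_le_sqrt h3
        rwa [Real.sqrt_sq (norm_nonneg _), Real.sqrt_mul (by norm_num),
          Real.sqrt_sq (hs0 k).le] at h5
      calc ρ k * |f k x| ≤ ρ k * (2 * ‖φ k x‖ * ‖D k x‖) :=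
            mul_le_mul_of_nonneg_left (hfb k x) (hρ k)
        _ ≤ ρ k * (2 * (Real.sqrt 3 * s k) * ‖D k x‖) := by
            refine mul_le_mul_of_nonneg_left ?_ (hρ k)
            refine mul_le_mul_of_nonneg_right ?_ (norm_nonneg _)
            linarith
        _ = 2 * Real.sqrt 3 * (ρ k * (s k * ‖D k x‖)) := by ring
    have hu2sum : Summable (fun k => u k ^ 2) := hsum3.congr fun k => (hu2 k).symm
    have hw2sum : Summable (fun k => w k ^ 2) := hvsum.congr fun k => (hw2 k).symm
    have huwsum : Summable (fun k => u k * w k) := by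
      refine Summable.of_nonneg_of_le
        (fun k => mul_nonneg (Real.sqrt_nonneg _) (Real.sqrt_nonneg _)) (fun k => ?_)
        ((hu2sum.add hw2sum).mul_left (1/2))
      nlinarith [sq_nonneg (u k - w k)]
    have hnormsum : Summable (fun k => |ρ k * f k x|) :=
      Summable.of_nonneg_of_le (fun k => abs_nonneg _) hterm (huwsum.mul_left _)
    have hgle : |∑' k, ρ k * f k x| ≤ 2 * Real.sqrt 3 * ∑' k, u k * w k := by
      have hn1 : |∑' k, ρ k * f k x| ≤ ∑' k, |ρ k * f k x| := by
        have hn2 := norm_tsum_le_tsum_norm (f := fun k => ρ k * f k x)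
          (by simpa only [Real.norm_eq_abs] using hnormsum)
        simpa only [Real.norm_eq_abs] using hn2
      refine hn1.trans ?_
      calc (∑' k, |ρ k * f k x|) ≤ ∑' k, 2 * Real.sqrt 3 * (u k * w k) :=
            Summable.tsum_le_tsum hterm hnormsum (huwsum.mul_left _)
        _ = 2 * Real.sqrt 3 * ∑' k, u k * w k := tsum_mul_left
    have hcs := tsum_cauchy_schwarz' (fun k => Real.sqrt_nonneg _)
      (fun k => Real.sqrt_nonneg _) hu2sum hw2sum
    have hAu : (∑' k, u k ^ 2) = A := by
      rw [hAdef]; exact tsum_congr fun k => hu2 k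
    have hGw : (∑' k, w k ^ 2) = G x := by
      rw [hGdef]; exact tsum_congr fun k => hw2 k
    have habs2 : |∑' k, ρ k * f k x|
        ≤ 2 * Real.sqrt 3 * (Real.sqrt A * Real.sqrt (G x)) := by
      refine hgle.trans ?_
      refine mul_le_mul_of_nonneg_left ?_ (by positivity)
      rw [← hAu, ← hGw]
      exact hcs
    calc (∑' k, ρ k * f k x) ^ 2 = |∑' k, ρ k * f k x| ^ 2 := (sq_abs _).symm
      _ ≤ (2 * Real.sqrt 3 * (Real.sqrt A * Real.sqrt (G x))) ^ 2 :=
          pow_le_pow_left₀ (abs_nonneg _) habs2 2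
      _ = 12 * A * G x := by
          rw [mul_pow, mul_pow, mul_pow, hsq3, Real.sq_sqrt hA0, Real.sq_sqrt (hGnn x)]
          ring
  have hIb : (∫ x in Ioo (0:ℝ) 1, (∑' k, ρ k * f k x) ^ 2) ≤ 12 * A * B := by
    have h1 : (∫ x in Ioo (0:ℝ) 1, (∑' k, ρ k * f k x) ^ 2)
        ≤ ∫ x in Ioo (0:ℝ) 1, 12 * A * G x :=
      integral_mono_of_nonneg (ae_of_all _ fun x => sq_nonneg _) (hGI.const_mul _) hptwise
    calc (∫ x in Ioo (0:ℝ) 1, (∑' k, ρ k * f k x) ^ 2)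
        ≤ ∫ x in Ioo (0:ℝ) 1, 12 * A * G x := h1
      _ = 12 * A * B := by rw [integral_const_mul, hGint]
  -- Hölder for the sums, via Cauchy–Schwarz twice
  set N := ∑' k, ρ k with hNdef
  have hN0 : 0 ≤ N := tsum_nonneg hρ
  set Et := ∑' k, ρ k * ((∫ y in Ioo (0:ℝ) 1, ‖φ k y‖ ^ 2)
    + ∫ y in Ioo (0:ℝ) 1, ‖D k y‖ ^ 2) with hEtdef
  have hEt : Et = ∑' k, ρ k * s k ^ 4 := by
    rw [hEtdef]; exact tsum_congr fun k => by rw [hs4 k]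
  have hEt0 : 0 ≤ Et := by
    rw [hEt]
    exact tsum_nonneg fun k => mul_nonneg (hρ k) (pow_nonneg (hs0 k).le 4)
  have hq1 : ∀ k, Real.sqrt (ρ k) ^ 2 = ρ k := fun k => Real.sq_sqrt (hρ k)
  have hq2 : ∀ k, (Real.sqrt (ρ k) * s k) ^ 2 = ρ k * s k ^ 2 := by
    intro k; rw [mul_pow, hq1 k]
  have hq3 : ∀ k, (Real.sqrt (ρ k) * s k ^ 2) ^ 2 = ρ k * s k ^ 4 := by
    intro k; rw [mul_pow, hq1 k]; ring
  have hsq' : Summable (fun k => Real.sqrt (ρ k) ^ 2) := hρsum.congr fun k => (hq1 k).symm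
  have hsb' : Summable (fun k => (Real.sqrt (ρ k) * s k ^ 2) ^ 2) :=
    hsum4.congr fun k => (hq3 k).symm
  have hsa' : Summable (fun k => (Real.sqrt (ρ k) * s k) ^ 2) :=
    hsum2.congr fun k => (hq2 k).symm
  have hstep2 : (∑' k, ρ k * s k ^ 2) ≤ Real.sqrt N * Real.sqrt Et := by
    have h1 := tsum_cauchy_schwarz' (fun k => Real.sqrt_nonneg (ρ k))
      (fun k => mul_nonneg (Real.sqrt_nonneg _) (sq_nonneg _)) hsq' hsb'
    have h2 : (∑' k, Real.sqrt (ρ k) * (Real.sqrt (ρ k) * s k ^ 2))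
        = ∑' k, ρ k * s k ^ 2 :=
      tsum_congr fun k => by rw [← mul_assoc, Real.mul_self_sqrt (hρ k)]
    have h3 : (∑' k, Real.sqrt (ρ k) ^ 2) = N := by
      rw [hNdef]; exact tsum_congr fun k => hq1 k
    have h4 : (∑' k, (Real.sqrt (ρ k) * s k ^ 2) ^ 2) = Et := by
      rw [hEt]; exact tsum_congr fun k => hq3 k
    rw [h2, h3, h4] at h1
    exact h1
  have hstep1 : A ≤ Real.sqrt (Real.sqrt N * Real.sqrt Et) * Real.sqrt Et := by
    have h1 := tsum_cauchy_schwarz'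
      (fun k => mul_nonneg (Real.sqrt_nonneg (ρ k)) (hs0 k).le)
      (fun k => mul_nonneg (Real.sqrt_nonneg _) (sq_nonneg _)) hsa' hsb'
    have h2 : (∑' k, (Real.sqrt (ρ k) * s k) * (Real.sqrt (ρ k) * s k ^ 2)) = A := by
      rw [hAdef]
      refine tsum_congr fun k => ?_
      rw [show (Real.sqrt (ρ k) * s k) * (Real.sqrt (ρ k) * s k ^ 2)
        = (Real.sqrt (ρ k) * Real.sqrt (ρ k)) * s k ^ 3 by ring,
        Real.mul_self_sqrt (hρ k)]
    have h6 : (∑' k, (Real.sqrt (ρ k) * s k ^ 2) ^ 2) = Et := by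
      rw [hEt]; exact tsum_congr fun k => hq3 k
    have h5 : (∑' k, (Real.sqrt (ρ k) * s k) ^ 2) ≤ Real.sqrt N * Real.sqrt Et := by
      refine le_trans (le_of_eq (tsum_congr fun k => hq2 k)) hstep2
    rw [h2, h6] at h1
    refine h1.trans ?_
    exact mul_le_mul_of_nonneg_right (Real.sqrt_le_sqrt h5) (Real.sqrt_nonneg _)
  have hfinal : Real.sqrt (∫ x in Ioo (0:ℝ) 1, (∑' k, ρ k * f k x) ^ 2)
      ≤ Real.sqrt 12 * (Real.sqrt (Real.sqrt N) * Real.sqrt (Real.sqrt Et) ^ 3) := by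
    have hc1 : Real.sqrt (∫ x in Ioo (0:ℝ) 1, (∑' k, ρ k * f k x) ^ 2)
        ≤ Real.sqrt (12 * A * B) := Real.sqrt_le_sqrt hIb
    have hc2 : Real.sqrt (12 * A * B) ≤ Real.sqrt (12 * A * A) :=
      Real.sqrt_le_sqrt (by nlinarith)
    have hc3 : Real.sqrt (12 * A * A) = Real.sqrt 12 * A := by
      rw [show (12:ℝ) * A * A = 12 * A ^ 2 by ring, Real.sqrt_mul (by norm_num),
        Real.sqrt_sq hA0]
    have hc4 : A ≤ Real.sqrt (Real.sqrt N) * Real.sqrt (Real.sqrt Et) ^ 3 := by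
      refine hstep1.trans ?_
      rw [Real.sqrt_mul (Real.sqrt_nonneg _)]
      have h7 : Real.sqrt (Real.sqrt Et) ^ 2 = Real.sqrt Et :=
        Real.sq_sqrt (Real.sqrt_nonneg _)
      exact le_of_eq (by linear_combination (-(Real.sqrt (Real.sqrt N)
        * Real.sqrt (Real.sqrt Et))) * h7)
    calc Real.sqrt (∫ x in Ioo (0:ℝ) 1, (∑' k, ρ k * f k x) ^ 2)
        ≤ Real.sqrt 12 * A := (hc1.trans hc2).trans_eq hc3
      _ ≤ Real.sqrt 12 * (Real.sqrt (Real.sqrt N) * Real.sqrt (Real.sqrt Et) ^ 3) :=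
          mul_le_mul_of_nonneg_left hc4 (Real.sqrt_nonneg _)
  have hN14 : N ^ ((1:ℝ)/4) = Real.sqrt (Real.sqrt N) := by
    rw [Real.sqrt_eq_rpow, Real.sqrt_eq_rpow, ← Real.rpow_mul hN0]
    norm_num
  have hE34 : Et ^ ((3:ℝ)/4) = Real.sqrt (Real.sqrt Et) ^ 3 := by
    rw [Real.sqrt_eq_rpow, Real.sqrt_eq_rpow, ← Real.rpow_mul hEt0,
      ← Real.rpow_natCast (Et ^ ((1:ℝ)/2 * (1/2))) 3, ← Real.rpow_mul hEt0]
    norm_num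
  have hrhs : Real.sqrt 12 * (Real.sqrt (Real.sqrt N) * Real.sqrt (Real.sqrt Et) ^ 3)
      = Real.sqrt 12 * N ^ ((1:ℝ)/4) * Et ^ ((3:ℝ)/4) := by
    rw [hN14, hE34]; ring
  exact le_of_le_of_eq hfinal hrhs
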